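/- Let N ≥ 2. Set ζ = (N−1, N−2, …, 2, 1) ∈ ℤ^{N-1} and ρ = (N−1, N−2, …, 2, 1, 0) ∈ ℤ^N. Suppose μ = (μ_1 ≥ μ_2 ≥ … ≥ μ_{N-1}) ∈ ℤ^{N-1} and ν = (ν_1 ≥ ν_2 ≥ … ≥ ν_N) ∈ ℤ^N form a relevant bisignature, i.e. they satisfy: for every 1 ≤ i ≤ N−1, if ν_i = ν_{i+1} then ν_i + μ_i = 0, and for every 2 ≤ i ≤ N−1, if μ_{i-1} = μ_i then ν_i + μ_i = 0. If moreover (ζ,ρ) − (μ,ν) lies in the ℕ-span of the simple roots α_1,…,α_{2N-2} (where α_{2i-1} = ε_i − δ_i and α_{2i} = δ_i − ε_{i+1} in ℤ^{N-1} ⊕ ℤ^N), then (μ,ν) = (ζ,ρ). In other words, (ζ,ρ) is the unique relevant bisignature dominated by (ζ,ρ). -/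
import Mathlib


/-- The weight lattice `X = ℤ^{N-1} ⊕ ℤ^N` of `GL(N-1|N)`. -/
abbrev WeightLattice (N : ℕ) := (Fin (N - 1) → ℤ) × (Fin N → ℤ)

/-- The basis vector `δ_i` of the first factor `ℤ^{N-1}`. -/
def deltaB (N : ℕ) (i : Fin (N - 1)) : WeightLattice N := (Pi.single i 1, 0)

/-- The basis vector `ε_i` of the second factor `ℤ^N`. -/
def epsB (N : ℕ) (i : Fin N) : WeightLattice N := (0, Pi.single i 1)

/-- The simple roots of `gl(N-1|N)` for the mixed Borel (0-indexed):
`α_{2i} = ε_i - δ_i`, `α_{2i+1} = δ_i - ε_{i+1}` for `0 ≤ i ≤ N-2`. -/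
def glRoot (N : ℕ) (j : Fin (2 * N - 2)) : WeightLattice N :=
  if (j : ℕ) % 2 = 0 then
    epsB N ⟨(j : ℕ) / 2, by have := j.isLt; omega⟩ -
      deltaB N ⟨(j : ℕ) / 2, by have := j.isLt; omega⟩
  else
    deltaB N ⟨(j : ℕ) / 2, by have := j.isLt; omega⟩ -
      epsB N ⟨(j : ℕ) / 2 + 1, by have := j.isLt; omega⟩

/-- The signature `ζ = (N-1, N-2, …, 2, 1)` (0-indexed: `ζ_i = N - 1 - i`). -/
def zetaSig (N : ℕ) : Fin (N - 1) → ℤ := fun i => (N : ℤ) - 1 - (i : ℕ)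

/-- The signature `ρ = (N-1, N-2, …, 2, 1, 0)` (0-indexed: `ρ_i = N - 1 - i`). -/
def rhoSig (N : ℕ) : Fin N → ℤ := fun i => (N : ℤ) - 1 - (i : ℕ)

lemma glRoot_fst_apply (N : ℕ) (j : Fin (2*N-2)) (i : Fin (N-1)) :
    (glRoot N j).1 i = if (j:ℕ) = 2*(i:ℕ)+1 then 1 else if (j:ℕ) = 2*(i:ℕ) then -1 else 0 := by
  have hj := j.isLt
  unfold glRoot epsB deltaB
  by_cases h2 : (j:ℕ) % 2 = 0
  · rw [if_pos h2]
    simp only [Prod.fst_sub, Pi.sub_apply, Pi.zero_apply, Pi.single_apply]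
    have h1 : ¬ ((j:ℕ) = 2*(i:ℕ)+1) := by omega
    rw [if_neg h1]
    by_cases h3 : (j:ℕ) = 2*(i:ℕ)
    · rw [if_pos h3, if_pos (by ext; simp; omega)]; ring
    · rw [if_neg h3, if_neg (by simp [Fin.ext_iff]; omega)]; ring
  · rw [if_neg h2]
    simp only [Prod.fst_sub, Pi.sub_apply, Pi.zero_apply, Pi.single_apply]
    have h1 : ¬ ((j:ℕ) = 2*(i:ℕ)) := by omega
    rw [if_neg h1]
    by_cases h3 : (j:ℕ) = 2*(i:ℕ)+1
    · rw [if_pos h3, if_pos (by ext; simp; omega)]; ring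
    · rw [if_neg h3, if_neg (by simp [Fin.ext_iff]; omega)]; ring

lemma glRoot_snd_apply (N : ℕ) (j : Fin (2*N-2)) (i : Fin N) :
    (glRoot N j).2 i = if (j:ℕ) = 2*(i:ℕ) then 1 else if (j:ℕ)+1 = 2*(i:ℕ) then -1 else 0 := by
  have hj := j.isLt
  unfold glRoot epsB deltaB
  by_cases h2 : (j:ℕ) % 2 = 0
  · rw [if_pos h2]
    simp only [Prod.snd_sub, Pi.sub_apply, Pi.zero_apply, Pi.single_apply]
    have h1 : ¬ ((j:ℕ)+1 = 2*(i:ℕ)) := by omega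
    rw [if_neg h1]
    by_cases h3 : (j:ℕ) = 2*(i:ℕ)
    · rw [if_pos h3, if_pos (by ext; simp; omega)]; ring
    · rw [if_neg h3, if_neg (by simp [Fin.ext_iff]; omega)]; ring
  · rw [if_neg h2]
    simp only [Prod.snd_sub, Pi.sub_apply, Pi.zero_apply, Pi.single_apply]
    have h1 : ¬ ((j:ℕ) = 2*(i:ℕ)) := by omega
    rw [if_neg h1]
    by_cases h3 : (j:ℕ)+1 = 2*(i:ℕ)
    · rw [if_pos h3, if_pos (by ext; simp; omega)]; ring
    · rw [if_neg h3, if_neg (by simp [Fin.ext_iff]; omega)]; ring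

/-- `a` extended to `ℕ` by zero. -/
def auxA (N : ℕ) (a : Fin (2*N-2) → ℕ) : ℕ → ℤ :=
  fun t => if h : t < 2*N-2 then (a ⟨t, h⟩ : ℤ) else 0

/-- shifted version: `auxG N a (t+1) = auxA N a t`, `auxG N a 0 = 0`. -/
def auxG (N : ℕ) (a : Fin (2*N-2) → ℕ) : ℕ → ℤ :=
  fun t => if h : 1 ≤ t ∧ t - 1 < 2*N-2 then (a ⟨t-1, h.2⟩ : ℤ) else 0

lemma auxA_nonneg (N : ℕ) (a : Fin (2*N-2) → ℕ) (t : ℕ) : 0 ≤ auxA N a t := by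
  unfold auxA; split <;> positivity

lemma auxG_nonneg (N : ℕ) (a : Fin (2*N-2) → ℕ) (t : ℕ) : 0 ≤ auxG N a t := by
  unfold auxG; split <;> positivity

lemma auxG_succ (N : ℕ) (a : Fin (2*N-2) → ℕ) (t : ℕ) : auxG N a (t+1) = auxA N a t := by
  unfold auxG auxA
  by_cases h : t < 2*N-2
  · rw [dif_pos ⟨by omega, by simpa using h⟩, dif_pos h]
    congr 1
  · rw [dif_neg (by omega), dif_neg h]

lemma auxG_zero (N : ℕ) (a : Fin (2*N-2) → ℕ) : auxG N a 0 = 0 := by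
  unfold auxG; rw [dif_neg (by omega)]

lemma auxG_top (N : ℕ) (hN : 2 ≤ N) (a : Fin (2*N-2) → ℕ) : auxG N a (2*N-1) = 0 := by
  unfold auxG; rw [dif_neg (by omega)]

lemma sum_ite_val (N : ℕ) (f : Fin (2*N-2) → ℤ) (c : ℕ) :
    (∑ j : Fin (2*N-2), if (j:ℕ) = c then f j else 0) = if h : c < 2*N-2 then f ⟨c, h⟩ else 0 := by
  rcases lt_or_ge c (2*N-2) with h | h
  · rw [dif_pos h, Finset.sum_eq_single (⟨c, h⟩ : Fin (2*N-2))]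
    · simp
    · intro b _ hb
      rw [if_neg (by simpa [Fin.ext_iff] using hb)]
    · intro h'; exact absurd (Finset.mem_univ _) h'
  · rw [dif_neg (by omega)]
    apply Finset.sum_eq_zero
    intro j _
    rw [if_neg (by have := j.isLt; omega)]

lemma sum_ite_val' (N : ℕ) (f : Fin (2*N-2) → ℤ) (c : ℕ) :
    (∑ j : Fin (2*N-2), if (j:ℕ)+1 = c then f j else 0)
      = if h : 1 ≤ c ∧ c - 1 < 2*N-2 then f ⟨c-1, h.2⟩ else 0 := by
  rcases c with _ | c'
  · rw [dif_neg (by omega)]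
    apply Finset.sum_eq_zero
    intro j _; rw [if_neg (by omega)]
  · have h1 : ∀ j : Fin (2*N-2), (if (j:ℕ)+1 = c'+1 then f j else 0)
        = (if (j:ℕ) = c' then f j else 0) := by
      intro j
      by_cases h : (j:ℕ) = c'
      · rw [if_pos (by omega), if_pos h]
      · rw [if_neg (by omega), if_neg h]
    rw [Finset.sum_congr rfl (fun j _ => h1 j), sum_ite_val]
    by_cases h : c' < 2*N-2
    · rw [dif_pos h, dif_pos ⟨by omega, by simpa using h⟩]
      congr 1
    · rw [dif_neg h, dif_neg (by omega)]

/-- The interleaved coordinate sequence of `(ζ,ρ) - (μ,ν)`. -/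
def auxC (N : ℕ) (μ : Fin (N-1) → ℤ) (ν : Fin N → ℤ) : ℕ → ℤ := fun s =>
  if s % 2 = 0 then ((N:ℤ) - 1 - (s/2 : ℕ)) - (if h : s/2 < N then ν ⟨s/2, h⟩ else 0)
  else ((N:ℤ) - 1 - (s/2 : ℕ)) - (if h : s/2 < N-1 then μ ⟨s/2, h⟩ else 0)

lemma auxC_even (N : ℕ) (μ : Fin (N-1) → ℤ) (ν : Fin N → ℤ) (i : ℕ) (h : i < N) :
    auxC N μ ν (2*i) = (N:ℤ) - 1 - (i:ℕ) - ν ⟨i, h⟩ := by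
  have h2 : (2*i) % 2 = 0 := by omega
  have h3 : (2*i) / 2 = i := by omega
  simp [auxC, h2, h3, h]

lemma auxC_odd (N : ℕ) (μ : Fin (N-1) → ℤ) (ν : Fin N → ℤ) (i : ℕ) (h : i < N-1) :
    auxC N μ ν (2*i+1) = (N:ℤ) - 1 - (i:ℕ) - μ ⟨i, h⟩ := by
  have h2 : (2*i+1) % 2 = 1 := by omega
  have h3 : (2*i+1) / 2 = i := by omega
  simp [auxC, h2, h3, h]

set_option maxHeartbeats 1600000 in
/-- `(ζ, ρ)` is the unique relevant bisignature dominated by `(ζ, ρ)`: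
if `(μ, ν)` is a relevant bisignature (weakly decreasing, and satisfying the relevance
condition `(1.1)` of the paper) with `(ζ,ρ) − (μ,ν)` in the `ℕ`-span of the simple roots
`α_1, …, α_{2N-2}`, then `(μ, ν) = (ζ, ρ)`. -/
theorem relevant_dominated_by_zeta_rho_eq (N : ℕ) (hN : 2 ≤ N)
    (μ : Fin (N - 1) → ℤ) (ν : Fin N → ℤ)
    (hμ : ∀ i j : Fin (N - 1), i ≤ j → μ j ≤ μ i)
    (hν : ∀ i j : Fin N, i ≤ j → ν j ≤ ν i)
    (hrel1 : ∀ i : ℕ, (h : i + 1 < N) →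
      ν ⟨i, by omega⟩ = ν ⟨i + 1, h⟩ → ν ⟨i, by omega⟩ + μ ⟨i, by omega⟩ = 0)
    (hrel2 : ∀ i : ℕ, 1 ≤ i → (h : i < N - 1) →
      μ ⟨i - 1, by omega⟩ = μ ⟨i, h⟩ → ν ⟨i, by omega⟩ + μ ⟨i, h⟩ = 0)
    (hdom : ∃ a : Fin (2 * N - 2) → ℕ,
      ((zetaSig N, rhoSig N) : WeightLattice N) - (μ, ν) = ∑ j, (a j : ℤ) • glRoot N j) :
    μ = zetaSig N ∧ ν = rhoSig N := by
  obtain ⟨a, ha⟩ := hdom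
  -- coordinate identities
  have he : ∀ i : Fin (N-1), zetaSig N i - μ i = auxA N a (2*(i:ℕ)+1) - auxA N a (2*(i:ℕ)) := by
    intro i
    have h1 := congrFun (congrArg Prod.fst ha) i
    simp only [Prod.fst_sub, Pi.sub_apply] at h1
    rw [Prod.fst_sum, Finset.sum_apply] at h1
    have h2 : ∀ j : Fin (2*N-2), ((a j : ℤ) • glRoot N j).1 i
        = (if (j:ℕ) = 2*(i:ℕ)+1 then (a j : ℤ) else 0)
          - (if (j:ℕ) = 2*(i:ℕ) then (a j : ℤ) else 0) := by
      intro j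
      rw [Prod.smul_fst, Pi.smul_apply, smul_eq_mul, glRoot_fst_apply]
      split_ifs with hc1 hc2
      · omega
      · ring
      · ring
      · ring
    rw [Finset.sum_congr rfl (fun j _ => h2 j), Finset.sum_sub_distrib,
      sum_ite_val, sum_ite_val] at h1
    exact h1
  have hd : ∀ i : Fin N, rhoSig N i - ν i = auxA N a (2*(i:ℕ)) - auxG N a (2*(i:ℕ)) := by
    intro i
    have h1 := congrFun (congrArg Prod.snd ha) i
    simp only [Prod.snd_sub, Pi.sub_apply] at h1
    rw [Prod.snd_sum, Finset.sum_apply] at h1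
    have h2 : ∀ j : Fin (2*N-2), ((a j : ℤ) • glRoot N j).2 i
        = (if (j:ℕ) = 2*(i:ℕ) then (a j : ℤ) else 0)
          - (if (j:ℕ)+1 = 2*(i:ℕ) then (a j : ℤ) else 0) := by
      intro j
      rw [Prod.smul_snd, Pi.smul_apply, smul_eq_mul, glRoot_snd_apply]
      split_ifs with hc1 hc2
      · omega
      · ring
      · ring
      · ring
    rw [Finset.sum_congr rfl (fun j _ => h2 j), Finset.sum_sub_distrib,
      sum_ite_val, sum_ite_val'] at h1
    rw [h1]
    rfl
  -- telescoping steps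
  have hstepE : ∀ i : ℕ, (h : i < N) →
      auxC N μ ν (2*i) = auxG N a (2*i+1) - auxG N a (2*i) := by
    intro i h
    rw [auxC_even N μ ν i h, auxG_succ]
    have h1 := hd ⟨i, h⟩
    rw [show rhoSig N ⟨i, h⟩ = (N:ℤ) - 1 - (i:ℕ) from rfl] at h1
    exact h1
  have hstepO : ∀ i : ℕ, (h : i < N-1) →
      auxC N μ ν (2*i+1) = auxG N a (2*i+1+1) - auxG N a (2*i+1) := by
    intro i h
    rw [auxC_odd N μ ν i h, auxG_succ, auxG_succ]
    have h1 := he ⟨i, h⟩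
    rw [show zetaSig N ⟨i, h⟩ = (N:ℤ) - 1 - (i:ℕ) from rfl] at h1
    exact h1
  have hstep : ∀ s : ℕ, s < 2*N-1 → auxC N μ ν s = auxG N a (s+1) - auxG N a s := by
    intro s hs
    rcases Nat.even_or_odd s with ⟨i, hi⟩ | ⟨i, hi⟩
    · have h2 : s = 2*i := by omega
      rw [h2]; exact hstepE i (by omega)
    · have h2 : s = 2*i+1 := by omega
      rw [h2]; exact hstepO i (by omega)
  have hsum : ∀ t : ℕ, t ≤ 2*N-1 →
      ∑ s ∈ Finset.range t, auxC N μ ν s = auxG N a t := by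
    intro t ht
    rw [Finset.sum_congr rfl (fun s hs =>
      hstep s (by have := Finset.mem_range.mp hs; omega)), Finset.sum_range_sub,
      auxG_zero, sub_zero]
  have hsplit : ∀ m : ℕ, ∑ s ∈ Finset.range (2*m), auxC N μ ν s
      = ∑ k ∈ Finset.range m, (auxC N μ ν (2*k) + auxC N μ ν (2*k+1)) := by
    intro m
    induction m with
    | zero => simp
    | succ m ih =>
      have e : 2*(m+1) = (2*m+1)+1 := by ring
      rw [e, Finset.sum_range_succ, Finset.sum_range_succ, ih, Finset.sum_range_succ]
      ring
  have htotal : ∑ s ∈ Finset.range (2*N-1), auxC N μ ν s = 0 := by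
    rw [hsum _ le_rfl, auxG_top N hN]
  clear ha he hd hstepE hstepO hstep
  -- first and last coordinate facts
  have hν0 : ν ⟨0, by omega⟩ ≤ (N:ℤ) - 1 := by
    have h1 := hsum 1 (by omega)
    rw [Finset.sum_range_one] at h1
    have h2 : auxC N μ ν 0 = (N:ℤ) - 1 - ((0:ℕ):ℤ) - ν ⟨0, by omega⟩ := by
      simpa using auxC_even N μ ν 0 (by omega)
    have h3 := auxG_nonneg N a 1
    rw [h2] at h1
    push_cast at h1 ⊢
    linarith
  have hνlast : 0 ≤ ν ⟨N-1, by omega⟩ := by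
    have h1 := hsum (2*N-2) (by omega)
    have h2 := htotal
    rw [show 2*N-1 = (2*N-2)+1 from by omega, Finset.sum_range_succ, h1] at h2
    have h4 := auxC_even N μ ν (N-1) (by omega)
    rw [show 2*(N-1) = 2*N-2 from by omega] at h4
    have h5 := auxG_nonneg N a (2*N-2)
    rw [h4] at h2
    have h6 : ((N:ℤ) - 1 - ((N-1 : ℕ) : ℤ)) = 0 := by
      have : ((N-1 : ℕ) : ℤ) = (N:ℤ) - 1 := by omega
      rw [this]; ring
    rw [h6] at h2
    linarith
  -- the key inequality at a "relevance" index
  have key : ∀ i : ℕ, (h : i < N-1) → ν ⟨i, by omega⟩ + μ ⟨i, h⟩ = 0 →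
      2*((N:ℤ) - 1 - (i:ℕ)) ≤ ν ⟨i, by omega⟩ := by
    intro i h h0
    have e1 : ∑ k ∈ Finset.range (N-1), (auxC N μ ν (2*k) + auxC N μ ν (2*k+1))
        + auxC N μ ν (2*(N-1)) = 0 := by
      have h2 := htotal
      rw [show 2*N-1 = (2*(N-1))+1 from by omega, Finset.sum_range_succ, hsplit] at h2
      exact h2
    have e2 : ∑ k ∈ Finset.range i, (auxC N μ ν (2*k) + auxC N μ ν (2*k+1))
        = auxG N a (2*i) := by
      rw [← hsplit, hsum _ (by omega)]
    have e3 : ∑ k ∈ Finset.range (N-1), (auxC N μ ν (2*k) + auxC N μ ν (2*k+1))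
        = auxG N a (2*i) + ∑ k ∈ Finset.Ico i (N-1), (auxC N μ ν (2*k) + auxC N μ ν (2*k+1)) := by
      rw [Finset.range_eq_Ico, ← Finset.sum_Ico_consecutive _ (Nat.zero_le i) (le_of_lt h),
        ← Finset.range_eq_Ico, e2]
    -- lower bound each pair by 2
    have e4 : ∀ k ∈ Finset.Ico i (N-1), (2:ℤ) ≤ auxC N μ ν (2*k) + auxC N μ ν (2*k+1) := by
      intro k hk
      have hk' := Finset.mem_Ico.mp hk
      have hkN : k < N := by omega
      rw [auxC_even N μ ν k hkN, auxC_odd N μ ν k hk'.2]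
      have l1 : ν ⟨k, hkN⟩ ≤ ν ⟨i, by omega⟩ := hν _ _ (Fin.mk_le_mk.mpr hk'.1)
      have l2 : μ ⟨k, hk'.2⟩ ≤ μ ⟨i, h⟩ := hμ _ _ (Fin.mk_le_mk.mpr hk'.1)
      have l3 : (k:ℤ) ≤ (N:ℤ) - 2 := by omega
      linarith
    have e5 : ((N-1-i : ℕ):ℤ) * 2 ≤ ∑ k ∈ Finset.Ico i (N-1), (auxC N μ ν (2*k) + auxC N μ ν (2*k+1)) := by
      have := Finset.card_nsmul_le_sum (Finset.Ico i (N-1)) _ (2:ℤ) e4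
      rwa [Nat.card_Ico, nsmul_eq_mul] at this
    have e6 := auxC_even N μ ν (N-1) (by omega)
    have h6 : ((N-1 : ℕ) : ℤ) = (N:ℤ) - 1 := by omega
    have e7 : ν ⟨N-1, by omega⟩ ≤ ν ⟨i, by omega⟩ := hν _ _ (Fin.mk_le_mk.mpr (by omega))
    have e8 := auxG_nonneg N a (2*i)
    have e9 : ((N-1-i : ℕ):ℤ) = (N:ℤ) - 1 - (i:ℕ) := by omega
    linarith [e1, e3, e5, e6, e7, e8, e9, h6]
  -- ν is strictly decreasing
  have νstrict : ∀ i : ℕ, (h : i+1 < N) → ν ⟨i+1, h⟩ < ν ⟨i, by omega⟩ := by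
    intro i
    induction i using Nat.strong_induction_on with
    | _ i IH =>
      intro h
      by_contra hcon
      push_neg at hcon
      have hle : ν ⟨i+1, h⟩ ≤ ν ⟨i, by omega⟩ := hν _ _ (Fin.mk_le_mk.mpr (by omega))
      have heq : ν ⟨i, by omega⟩ = ν ⟨i+1, h⟩ := le_antisymm hcon hle
      have h0 := hrel1 i h heq
      have hkey := key i (by omega) h0
      have hub : ∀ k : ℕ, (hk : k ≤ i) → ν ⟨k, by omega⟩ ≤ (N:ℤ) - 1 - (k:ℕ) := by
        intro k
        induction k with
        | zero => intro _; simpa using hν0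
        | succ k ihk =>
          intro hk
          have h1 := IH k (by omega) (by omega)
          have h2 := ihk (by omega)
          push_cast at h2 ⊢
          linarith
      have h3 := hub i le_rfl
      have h4 : (i:ℤ) ≤ (N:ℤ) - 2 := by
        have : i < N - 1 := by omega
        omega
      linarith
  -- upper bound for ν
  have hub : ∀ k : ℕ, (hk : k < N) → ν ⟨k, hk⟩ ≤ (N:ℤ) - 1 - (k:ℕ) := by
    intro k
    induction k with
    | zero => intro _; simpa using hν0
    | succ k ihk =>
      intro hk
      have h1 := νstrict k hk
      have h2 := ihk (by omega)
      push_cast at h2 ⊢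
      linarith
  -- lower bound for ν
  have hlbAux : ∀ d : ℕ, (hd : d < N) → (d:ℤ) ≤ ν ⟨N-1-d, by omega⟩ := by
    intro d
    induction d with
    | zero => intro _; simpa using hνlast
    | succ d ihd =>
      intro hd
      have h1 := ihd (by omega)
      have h2 := νstrict (N-1-(d+1)) (by omega)
      have h3 : ν ⟨N-1-(d+1)+1, by omega⟩ = ν ⟨N-1-d, by omega⟩ :=
        congrArg ν (by ext; simp; omega)
      push_cast
      linarith [h1, h2, h3]
  have hνρ : ∀ k : ℕ, (hk : k < N) → ν ⟨k, hk⟩ = (N:ℤ) - 1 - (k:ℕ) := by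
    intro k hk
    have h1 := hub k hk
    have h2 := hlbAux (N-1-k) (by omega)
    have h3 : ν ⟨N-1-(N-1-k), by omega⟩ = ν ⟨k, hk⟩ :=
      congrArg ν (by ext; simp; omega)
    have h4 : ((N-1-k : ℕ) : ℤ) = (N:ℤ) - 1 - (k:ℕ) := by omega
    linarith [h1, h2, h3, h4]
  -- μ is strictly decreasing
  have μstrict : ∀ i : ℕ, 1 ≤ i → (h2 : i < N-1) → μ ⟨i, h2⟩ < μ ⟨i-1, by omega⟩ := by
    intro i h1 h2
    by_contra hcon
    push_neg at hcon
    have hle : μ ⟨i, h2⟩ ≤ μ ⟨i-1, by omega⟩ := hμ _ _ (Fin.mk_le_mk.mpr (by omega))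
    have heq : μ ⟨i-1, by omega⟩ = μ ⟨i, h2⟩ := le_antisymm hcon hle
    have h0 := hrel2 i h1 h2 heq
    have hkey := key i h2 h0
    have h3 := hub i (by omega)
    have h4 : (i:ℤ) ≤ (N:ℤ) - 2 := by
      have : i < N - 1 := by omega
      omega
    linarith
  -- upper bound for μ
  have hμ0 : μ ⟨0, by omega⟩ ≤ (N:ℤ) - 1 := by
    have h1 := hsum 2 (by omega)
    rw [Finset.sum_range_succ, Finset.sum_range_one] at h1
    have h2 : auxC N μ ν 0 = (N:ℤ) - 1 - ν ⟨0, by omega⟩ := by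
      have := auxC_even N μ ν 0 (by omega)
      simpa using this
    have h3 : auxC N μ ν 1 = (N:ℤ) - 1 - μ ⟨0, by omega⟩ := by
      have := auxC_odd N μ ν 0 (by omega)
      simpa using this
    have h4 := auxG_nonneg N a 2
    have h5 : ν ⟨0, by omega⟩ = (N:ℤ) - 1 - ((0:ℕ):ℤ) := hνρ 0 (by omega)
    push_cast at h5
    linarith
  have hμub : ∀ k : ℕ, (hk : k < N-1) → μ ⟨k, hk⟩ ≤ (N:ℤ) - 1 - (k:ℕ) := by
    intro k
    induction k with
    | zero => intro _; simpa using hμ0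
    | succ k ihk =>
      intro hk
      have h1 := μstrict (k+1) (by omega) hk
      have h2 := ihk (by omega)
      have h3 : μ ⟨k+1-1, by omega⟩ = μ ⟨k, by omega⟩ := congrArg μ (by ext; simp)
      push_cast at h2 ⊢
      linarith [h1, h2, h3]
  -- the total sum forces equality
  have e1 : ∑ k ∈ Finset.range (N-1), (auxC N μ ν (2*k) + auxC N μ ν (2*k+1))
      + auxC N μ ν (2*(N-1)) = 0 := by
    have h2 := htotal
    rw [show 2*N-1 = (2*(N-1))+1 from by omega, Finset.sum_range_succ, hsplit] at h2
    exact h2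
  have e6 := auxC_even N μ ν (N-1) (by omega)
  have hlastz : ν ⟨N-1, by omega⟩ = 0 := by
    have h1 := hνρ (N-1) (by omega)
    have h4 : ((N-1:ℕ):ℤ) = (N:ℤ) - 1 := by omega
    linarith
  have hClast : auxC N μ ν (2*(N-1)) = 0 := by
    have h4 : ((N-1:ℕ):ℤ) = (N:ℤ) - 1 := by omega
    linarith [e6, hlastz]
  have hStot : ∑ k ∈ Finset.range (N-1), (auxC N μ ν (2*k) + auxC N μ ν (2*k+1)) = 0 := by
    linarith [e1, hClast]
  have hnn : ∀ k ∈ Finset.range (N-1), 0 ≤ auxC N μ ν (2*k) + auxC N μ ν (2*k+1) := by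
    intro k hkm
    have hk : k < N-1 := Finset.mem_range.mp hkm
    have h2 := auxC_even N μ ν k (by omega)
    have h3 := auxC_odd N μ ν k hk
    have h4 := hνρ k (by omega)
    have h5 := hμub k hk
    linarith
  have hz := (Finset.sum_eq_zero_iff_of_nonneg hnn).mp hStot
  have hμρ : ∀ k : ℕ, (hk : k < N-1) → μ ⟨k, hk⟩ = (N:ℤ) - 1 - (k:ℕ) := by
    intro k hk
    have h1 := hz k (Finset.mem_range.mpr hk)
    have h2 := auxC_even N μ ν k (by omega)
    have h3 := auxC_odd N μ ν k hk
    have h4 := hνρ k (by omega)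
    linarith
  constructor
  · funext x
    have h1 := hμρ x.val x.isLt
    have h2 : (⟨x.val, x.isLt⟩ : Fin (N-1)) = x := by ext; simp
    rw [h2] at h1
    exact h1
  · funext x
    have h1 := hνρ x.val x.isLt
    have h2 : (⟨x.val, x.isLt⟩ : Fin N) = x := by ext; simp
    rw [h2] at h1
    exact h1
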